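/- For any vector y ∈ ℝ^p and any α ∈ (0,2), setting β = α/(2−α), the ℓ_α quasi-norm satisfies ‖y‖_α = min over z ∈ ℝ_+^p of (1/2)∑_{j=1}^p y_j²/z_j + (1/2)‖z‖_β, where terms y_j²/z_j are interpreted as 0 if y_j = 0 and z_j = 0, and as +∞ if y_j ≠ 0 and z_j = 0. -/

import Mathlib

open scoped BigOperators ENNReal

/-- The ℓ_α quasi-norm of a vector `y ∈ ℝ^p`: `(∑ j |y j|^α)^(1/α)`. -/
noncomputable def lpQuasiNorm {p : ℕ} (α : ℝ) (y : Fin p → ℝ) : ℝ :=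
  (∑ j, |y j| ^ α) ^ (1 / α)

/-- The variational objective `(1/2)∑ y_j²/z_j + (1/2)‖z‖_β`, valued in `ℝ≥0∞`
so that `a/0 = ∞` for `a ≠ 0` and `0/0 = 0`. -/
noncomputable def varObj {p : ℕ} (β : ℝ) (y z : Fin p → ℝ) : ℝ≥0∞ :=
  (1 / 2) * ∑ j, ENNReal.ofReal (y j ^ 2) / ENNReal.ofReal (z j)
    + (1 / 2) * ENNReal.ofReal (lpQuasiNorm β z)

lemma varObj_eq_ofReal {p : ℕ} (β : ℝ) (y z : Fin p → ℝ) (hz : ∀ j, 0 ≤ z j)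
    (h : ∀ j, z j = 0 → y j = 0) :
    varObj β y z
      = ENNReal.ofReal ((∑ j, y j ^ 2 / z j) / 2 + lpQuasiNorm β z / 2) := by
  have hA : ∀ j : Fin p, (0:ℝ) ≤ y j ^ 2 / z j := fun j => div_nonneg (sq_nonneg _) (hz j)
  have hterm : ∀ j : Fin p,
      ENNReal.ofReal (y j ^ 2) / ENNReal.ofReal (z j) = ENNReal.ofReal (y j ^ 2 / z j) := by
    intro j
    rcases eq_or_lt_of_le (hz j) with h0 | h0
    · rw [← h0, h j h0.symm]
      simp
    · rw [ENNReal.ofReal_div_of_pos h0]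
  have hB : 0 ≤ lpQuasiNorm β z :=
    Real.rpow_nonneg (Finset.sum_nonneg fun j _ => Real.rpow_nonneg (abs_nonneg _) _) _
  have hsum : ∑ j, ENNReal.ofReal (y j ^ 2) / ENNReal.ofReal (z j)
      = ENNReal.ofReal (∑ j, y j ^ 2 / z j) := by
    rw [ENNReal.ofReal_sum_of_nonneg fun j _ => hA j]
    exact Finset.sum_congr rfl fun j _ => hterm j
  have hAs : (0:ℝ) ≤ ∑ j, y j ^ 2 / z j := Finset.sum_nonneg fun j _ => hA j
  rw [varObj, hsum,
    ENNReal.ofReal_add (div_nonneg hAs two_pos.le) (div_nonneg hB two_pos.le)]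
  congr 1
  · rw [ENNReal.ofReal_div_of_pos two_pos, ENNReal.ofReal_ofNat,
      ENNReal.div_eq_inv_mul, mul_one, mul_comm, ← div_eq_mul_inv]
  · rw [ENNReal.ofReal_div_of_pos two_pos, ENNReal.ofReal_ofNat,
      ENNReal.div_eq_inv_mul, mul_one, mul_comm, ← div_eq_mul_inv]

lemma spca_lower_real {p : ℕ} {α β : ℝ} (hα0 : 0 < α) (hα2 : α < 2)
    (hβ : β = α / (2 - α)) (y z : Fin p → ℝ) (hz : ∀ j, 0 ≤ z j)
    (h : ∀ j, z j = 0 → y j = 0) :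
    lpQuasiNorm α y ≤ (∑ j, y j ^ 2 / z j) / 2 + lpQuasiNorm β z / 2 := by
  have h2 : (0:ℝ) < 2 - α := by linarith
  have hβ0 : 0 < β := by rw [hβ]; positivity
  set A : ℝ := ∑ j, y j ^ 2 / z j with hAdef
  set B : ℝ := lpQuasiNorm β z with hBdef
  set S : ℝ := ∑ j, |y j| ^ α with hSdef
  have hA0 : 0 ≤ A := Finset.sum_nonneg fun j _ => div_nonneg (sq_nonneg _) (hz j)
  have hzb0 : (0:ℝ) ≤ ∑ j, |z j| ^ β :=
    Finset.sum_nonneg fun j _ => Real.rpow_nonneg (abs_nonneg _) _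
  have hB0 : 0 ≤ B := Real.rpow_nonneg hzb0 _
  have hS0 : 0 ≤ S := Finset.sum_nonneg fun j _ => Real.rpow_nonneg (abs_nonneg _) _
  have hconj : Real.HolderConjugate (2/α) (2/(2-α)) := by
    rw [Real.holderConjugate_iff]
    constructor
    · rw [lt_div_iff₀ hα0]; linarith
    · rw [← one_div, ← one_div, one_div_div, one_div_div]; ring
  -- rewrite S as inner product
  have hS_eq : S = ∑ j, (y j ^ 2 / z j) ^ (α/2) * (z j) ^ (α/2) := by
    refine Finset.sum_congr rfl fun j _ => ?_
    rcases eq_or_lt_of_le (hz j) with h0 | h0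
    · rw [← h0, h j h0.symm]
      simp [Real.zero_rpow hα0.ne', Real.zero_rpow (by positivity : (α/2) ≠ 0)]
    · rw [← Real.mul_rpow (div_nonneg (sq_nonneg _) (hz j)) (hz j),
        div_mul_cancel₀ _ h0.ne', ← sq_abs, ← Real.rpow_natCast |y j| 2,
        ← Real.rpow_mul (abs_nonneg _),
        show ((2:ℕ):ℝ) * (α/2) = α by push_cast; ring]
  have holder := Real.inner_le_Lp_mul_Lq_of_nonneg (s := Finset.univ)
    (f := fun j => (y j ^ 2 / z j) ^ (α/2)) (g := fun j => z j ^ (α/2)) hconj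
    (fun i _ => Real.rpow_nonneg (div_nonneg (sq_nonneg _) (hz i)) _)
    (fun i _ => Real.rpow_nonneg (hz i) _)
  have hf : ∀ j : Fin p, ((y j ^ 2 / z j) ^ (α/2)) ^ (2/α) = y j ^ 2 / z j := by
    intro j
    rw [← Real.rpow_mul (div_nonneg (sq_nonneg _) (hz j))]
    rw [show (α/2) * (2/α) = 1 by field_simp, Real.rpow_one]
  have hg : ∀ j : Fin p, ((z j) ^ (α/2)) ^ (2/(2-α)) = z j ^ β := by
    intro j
    rw [← Real.rpow_mul (hz j), hβ]
    congr 1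
    field_simp
  have hBpow : (∑ j, z j ^ β) ^ (1/(2/(2-α))) = B ^ (α/2) := by
    have : B = (∑ j, z j ^ β) ^ (1/β) := by
      rw [hBdef, lpQuasiNorm]
      congr 1
      exact Finset.sum_congr rfl fun j _ => by rw [abs_of_nonneg (hz j)]
    rw [this, ← Real.rpow_mul (Finset.sum_nonneg fun j _ => Real.rpow_nonneg (hz j) _)]
    congr 1
    rw [hβ]
    rw [one_div_div, one_div_div]
    field_simp
  have key : S ≤ A ^ (α/2) * B ^ (α/2) := by
    calc S = ∑ j, (y j ^ 2 / z j) ^ (α/2) * (z j) ^ (α/2) := hS_eq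
    _ ≤ (∑ j, ((y j ^ 2 / z j) ^ (α/2)) ^ (2/α)) ^ (1/(2/α))
        * (∑ j, ((z j) ^ (α/2)) ^ (2/(2-α))) ^ (1/(2/(2-α))) := holder
    _ = A ^ (α/2) * B ^ (α/2) := by
        rw [Finset.sum_congr rfl fun j _ => hf j, Finset.sum_congr rfl fun j _ => hg j,
          hBpow, one_div_div, hAdef]
  have step2 : lpQuasiNorm α y ≤ (A * B) ^ ((1:ℝ)/2) := by
    have h1 : lpQuasiNorm α y = S ^ (1/α) := rfl
    rw [h1]
    calc S ^ (1/α) ≤ (A ^ (α/2) * B ^ (α/2)) ^ (1/α) :=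
          Real.rpow_le_rpow hS0 key (by positivity)
    _ = (A * B) ^ ((1:ℝ)/2) := by
        rw [← Real.mul_rpow hA0 hB0, ← Real.rpow_mul (mul_nonneg hA0 hB0)]
        congr 1
        field_simp
  calc lpQuasiNorm α y ≤ (A * B) ^ ((1:ℝ)/2) := step2
  _ ≤ A / 2 + B / 2 := by
      rw [← Real.sqrt_eq_rpow, Real.sqrt_mul hA0]
      nlinarith [Real.sq_sqrt hA0, Real.sq_sqrt hB0, sq_nonneg (Real.sqrt A - Real.sqrt B),
        Real.sqrt_nonneg A, Real.sqrt_nonneg B]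

lemma spca_achieve_real {p : ℕ} {α β : ℝ} (hα0 : 0 < α) (hα2 : α < 2)
    (hβ : β = α / (2 - α)) (y : Fin p → ℝ)
    (hS : (0:ℝ) < ∑ j, |y j| ^ α) :
    ∃ z : Fin p → ℝ, (∀ j, 0 ≤ z j) ∧ (∀ j, z j = 0 → y j = 0) ∧
      (∑ j, y j ^ 2 / z j) / 2 + lpQuasiNorm β z / 2 = lpQuasiNorm α y := by
  have h2 : (0:ℝ) < 2 - α := by linarith
  have hβ0 : 0 < β := by rw [hβ]; positivity
  set S : ℝ := ∑ j, |y j| ^ α with hSdef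
  set c : ℝ := S ^ ((α - 1)/α) with hcdef
  have hc0 : 0 < c := Real.rpow_pos_of_pos hS _
  refine ⟨fun j => c * |y j| ^ (2 - α), fun j => by positivity, fun j hj => ?_, ?_⟩
  · -- z j = 0 → y j = 0
    rcases mul_eq_zero.1 hj with h | h
    · exact absurd h hc0.ne'
    · have := (Real.rpow_eq_zero (abs_nonneg _) h2.ne').1 h
      exact abs_eq_zero.1 this
  · have hA : (∑ j, y j ^ 2 / (c * |y j| ^ (2 - α))) = S / c := by
      rw [hSdef, Finset.sum_div]
      refine Finset.sum_congr rfl fun j _ => ?_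
      by_cases hyj : y j = 0
      · simp [hyj, Real.zero_rpow h2.ne', Real.zero_rpow hα0.ne']
      · have habs : 0 < |y j| := abs_pos.2 hyj
        rw [← sq_abs, ← Real.rpow_natCast |y j| 2, mul_comm, ← div_div,
          ← Real.rpow_sub habs, show ((2:ℕ):ℝ) - (2 - α) = α by push_cast; ring]
    have hB : lpQuasiNorm β (fun j => c * |y j| ^ (2 - α)) = c * S ^ (1/β) := by
      rw [lpQuasiNorm]
      have hterm : ∀ j : Fin p, |c * |y j| ^ (2 - α)| ^ β = c ^ β * |y j| ^ α := by
        intro j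
        rw [abs_of_nonneg (by positivity), Real.mul_rpow hc0.le (by positivity),
          ← Real.rpow_mul (abs_nonneg _), show (2 - α) * β = α by rw [hβ]; field_simp]
      rw [Finset.sum_congr rfl fun j _ => hterm j, ← Finset.mul_sum, ← hSdef,
        Real.mul_rpow (by positivity) hS.le, ← Real.rpow_mul hc0.le,
        mul_one_div_cancel hβ0.ne', Real.rpow_one]
    have hSc : S / c = S ^ (1/α) := by
      rw [div_eq_iff hc0.ne', hcdef, ← Real.rpow_add hS,
        show 1/α + (α - 1)/α = 1 by field_simp; ring, Real.rpow_one]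
    have hcS : c * S ^ (1/β) = S ^ (1/α) := by
      rw [hcdef, ← Real.rpow_add hS]
      congr 1
      rw [hβ, one_div_div]
      field_simp
      ring
    rw [hA, hB, hSc, hcS, add_halves]
    rfl

theorem sparse_pca_variational_formula {p : ℕ} (α β : ℝ)
    (hα : α ∈ Set.Ioo (0 : ℝ) 2) (hβ : β = α / (2 - α)) (y : Fin p → ℝ) :
    IsLeast {v : ℝ≥0∞ | ∃ z : Fin p → ℝ, (∀ j, 0 ≤ z j) ∧ v = varObj β y z}
      (ENNReal.ofReal (lpQuasiNorm α y)) := by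
  obtain ⟨hα0, hα2⟩ := hα
  have h2 : (0:ℝ) < 2 - α := by linarith
  have hβ0 : 0 < β := by rw [hβ]; positivity
  constructor
  · -- membership: the minimum is attained
    have hS0 : (0:ℝ) ≤ ∑ j, |y j| ^ α :=
      Finset.sum_nonneg fun j _ => Real.rpow_nonneg (abs_nonneg _) _
    rcases eq_or_lt_of_le hS0 with hS | hS
    · -- degenerate case y = 0: take z = 0
      have hy : ∀ j, y j = 0 := by
        intro j
        have h0 := (Finset.sum_eq_zero_iff_of_nonneg
          (fun j _ => Real.rpow_nonneg (abs_nonneg (y j)) α)).1 hS.symm j (Finset.mem_univ j)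
        exact abs_eq_zero.1 ((Real.rpow_eq_zero (abs_nonneg _) hα0.ne').1 h0)
      refine ⟨0, fun j => le_refl 0, ?_⟩
      simp [varObj, lpQuasiNorm, hy, Real.zero_rpow hα0.ne', Real.zero_rpow hβ0.ne',
        Real.zero_rpow (one_div_ne_zero hα0.ne'), Real.zero_rpow (one_div_ne_zero hβ0.ne'),
        Real.zero_rpow (inv_ne_zero hα0.ne'), Real.zero_rpow (inv_ne_zero hβ0.ne')]
    · obtain ⟨z, hz0, hzy, heq⟩ := spca_achieve_real hα0 hα2 hβ y hS
      exact ⟨z, hz0, by rw [varObj_eq_ofReal β y z hz0 hzy, heq]⟩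
  · -- lower bound
    rintro v ⟨z, hz0, rfl⟩
    by_cases hzy : ∀ j, z j = 0 → y j = 0
    · rw [varObj_eq_ofReal β y z hz0 hzy]
      exact ENNReal.ofReal_le_ofReal (spca_lower_real hα0 hα2 hβ y z hz0 hzy)
    · push_neg at hzy
      obtain ⟨j, hzj, hyj⟩ := hzy
      have hterm : ENNReal.ofReal (y j ^ 2) / ENNReal.ofReal (z j) = ⊤ := by
        rw [hzj, ENNReal.ofReal_zero]
        exact ENNReal.div_zero
          (ENNReal.ofReal_pos.2 ((sq_nonneg (y j)).lt_of_ne' (pow_ne_zero 2 hyj))).ne'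
      have hsum : ∑ i, ENNReal.ofReal (y i ^ 2) / ENNReal.ofReal (z i) = ⊤ :=
        ENNReal.sum_eq_top.2 ⟨j, Finset.mem_univ j, hterm⟩
      have hT : varObj β y z = ⊤ := by
        rw [varObj, hsum, ENNReal.mul_top (by norm_num)]
        simp
      rw [hT]
      exact le_top
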